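/- The kernel of 𝓛 = J∘L is the two-dimensional space generated by v₁(x) = (0, 1/cosh x) and v₂(x) = (1/cosh x, 0): if r = (r₁,r₂) : ℝ → ℝ² is twice continuously differentiable with both components square-integrable on ℝ and satisfies J(L r₁(x), L r₂(x)) = 0 for all x ∈ ℝ, then there exist a, b ∈ ℝ such that r₁(x) = a/cosh x and r₂(x) = b/cosh x for all x. -/

import Mathlib

open MeasureTheory

lemma sech_sol (f : ℝ → ℝ) (hf : ContDiff ℝ 2 f)
    (hL2 : Integrable (fun x => f x ^ 2))
    (hode : ∀ x, deriv (deriv f) x = (2 * Real.tanh x ^ 2 - 1) * f x) :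
    ∃ a : ℝ, ∀ x, f x = a / Real.cosh x := by
  -- basic derivative facts
  have hf1 : Differentiable ℝ f := hf.differentiable (by norm_num)
  have hfd : ContDiff ℝ 1 (deriv f) := by
    have := (contDiff_succ_iff_deriv (n := 1)).mp (by norm_num at hf ⊢; exact hf)
    exact this.2.2
  have hf2 : Differentiable ℝ (deriv f) := hfd.differentiable (by norm_num)
  have hdf : ∀ x, HasDerivAt f (deriv f x) x := fun x => (hf1 x).hasDerivAt
  have hdf2 : ∀ x, HasDerivAt (deriv f)
      ((2 * Real.tanh x ^ 2 - 1) * f x) x := by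
    intro x
    have := (hf2 x).hasDerivAt
    rwa [hode x] at this
  set g : ℝ → ℝ := fun x => deriv f x * Real.cosh x + f x * Real.sinh x with hg
  have hcosh0 : ∀ x : ℝ, Real.cosh x ≠ 0 := fun x => (Real.cosh_pos x).ne'
  have hdg : ∀ x, HasDerivAt g (2 * Real.tanh x * g x) x := by
    intro x
    have h := ((hdf2 x).mul (Real.hasDerivAt_cosh x)).add
      ((hdf x).mul (Real.hasDerivAt_sinh x))
    refine h.congr_deriv ?_
    rw [Real.tanh_eq_sinh_div_cosh]
    have h1 := Real.cosh_sq x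
    field_simp [hg]
    nlinarith [Real.sinh_sq x]
  -- u = g / cosh^2 is constant
  set u : ℝ → ℝ := fun x => g x / Real.cosh x ^ 2 with hu
  have hdu : ∀ x, HasDerivAt u 0 x := by
    intro x
    have hc : HasDerivAt (fun x => Real.cosh x ^ 2)
        (2 * Real.cosh x ^ 1 * Real.sinh x) x := (Real.hasDerivAt_cosh x).pow 2
    have h := (hdg x).div hc (pow_ne_zero 2 (hcosh0 x))
    refine h.congr_deriv ?_
    rw [Real.tanh_eq_sinh_div_cosh]
    field_simp
    ring
  have hconst : ∀ x, u x = u 0 :=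
    fun x => is_const_of_deriv_eq_zero (fun y => (hdu y).differentiableAt)
      (fun y => (hdu y).deriv) x 0
  set c : ℝ := deriv f 0 with hc0
  have hu0 : u 0 = c := by simp [hu, hg, hc0]
  have hgc : ∀ x, g x = c * Real.cosh x ^ 2 := by
    intro x
    have := hconst x
    rw [hu0] at this
    simp only [hu] at this
    field_simp at this
    linarith [this]
  -- φ = f*cosh - c*(x + sinh*cosh)/2 is constant
  set φ : ℝ → ℝ := fun x => f x * Real.cosh x - c * (x + Real.sinh x * Real.cosh x) / 2 with hφ
  have hdφ : ∀ x, HasDerivAt φ 0 x := by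
    intro x
    have h := ((hdf x).mul (Real.hasDerivAt_cosh x)).sub
      ((((hasDerivAt_id x).add ((Real.hasDerivAt_sinh x).mul
        (Real.hasDerivAt_cosh x))).const_mul c).div_const 2)
    refine h.congr_deriv ?_
    have hgx := hgc x
    simp only [hg] at hgx
    have h1 := Real.cosh_sq x
    linear_combination hgx + c / 2 * h1
  have hφconst : ∀ x, φ x = φ 0 :=
    fun x => is_const_of_deriv_eq_zero (fun y => (hdφ y).differentiableAt)
      (fun y => (hdφ y).deriv) x 0
  have hφ0 : φ 0 = f 0 := by simp [hφ]
  -- main formula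
  have hform : ∀ x, f x * Real.cosh x = f 0 + c * (x + Real.sinh x * Real.cosh x) / 2 := by
    intro x
    have := hφconst x
    rw [hφ0] at this
    simp only [hφ] at this
    linarith
  -- c = 0
  have hc : c = 0 := by
    by_contra hc
    set a := f 0 with ha
    have habs : ∀ x : ℝ, 0 ≤ x → |c| / 2 * Real.sinh x - (|a| + |c| / 2) ≤ |f x| := by
      intro x hx
      have hcx := Real.cosh_pos x
      have hfx : f x = a / Real.cosh x + c * x / (2 * Real.cosh x) + c * Real.sinh x / 2 := by
        rw [show a / Real.cosh x + c * x / (2 * Real.cosh x) + c * Real.sinh x / 2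
            = (a + c * (x + Real.sinh x * Real.cosh x) / 2) / Real.cosh x from by
          field_simp; ring]
        rw [eq_div_iff (hcosh0 x)]
        linarith [hform x]
      have h1 : |a / Real.cosh x| ≤ |a| := by
        rw [abs_div, abs_of_pos hcx, div_le_iff₀ hcx]
        nlinarith [Real.one_le_cosh x, abs_nonneg a]
      have h2 : |c * x / (2 * Real.cosh x)| ≤ |c| / 2 := by
        rw [abs_div, abs_of_pos (by positivity : (0:ℝ) < 2 * Real.cosh x),
          div_le_div_iff₀ (by positivity) (by norm_num)]
        have hxc : x ≤ Real.cosh x :=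
          le_trans (Real.self_le_sinh_iff.mpr hx) (Real.sinh_lt_cosh x).le
        rw [abs_mul, abs_of_nonneg hx]
        nlinarith [abs_nonneg c]
      have h3 : |c * Real.sinh x / 2| = |c| / 2 * Real.sinh x := by
        rw [abs_div, abs_mul, abs_of_nonneg (Real.sinh_nonneg_iff.mpr hx)]
        norm_num; ring
      calc |c| / 2 * Real.sinh x - (|a| + |c| / 2)
          ≤ |c * Real.sinh x / 2| - |a / Real.cosh x| - |c * x / (2 * Real.cosh x)| := by
            rw [h3]; linarith
        _ ≤ |f x| := by
            rw [hfx]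
            have := abs_add_le (a / Real.cosh x + c * x / (2 * Real.cosh x)) (c * Real.sinh x / 2)
            have := abs_add_le (a / Real.cosh x) (c * x / (2 * Real.cosh x))
            have h4 : |c * Real.sinh x / 2| ≤ |a / Real.cosh x + c * x / (2 * Real.cosh x) + c * Real.sinh x / 2| + |a / Real.cosh x + c * x / (2 * Real.cosh x)| := by
              have := abs_sub_abs_le_abs_sub (c * Real.sinh x / 2)
                (-(a / Real.cosh x + c * x / (2 * Real.cosh x)))
              simp only [abs_neg, sub_neg_eq_add] at this
              have heq : c * Real.sinh x / 2 + (a / Real.cosh x + c * x / (2 * Real.cosh x)) = a / Real.cosh x + c * x / (2 * Real.cosh x) + c * Real.sinh x / 2 := by ring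
              rw [heq] at this
              linarith
            linarith
    -- choose M
    set B : ℝ := (2 + 2 * |a| + |c|) / |c| with hB
    set M : ℝ := max 0 (Real.arsinh B) with hM
    have hkey : ∀ x : ℝ, M ≤ x → (1:ℝ) ≤ f x ^ 2 := by
      intro x hx
      have hx0 : 0 ≤ x := le_trans (le_max_left _ _) hx
      have hsinh : B ≤ Real.sinh x := by
        rw [← Real.sinh_arsinh B]
        exact Real.sinh_le_sinh.mpr (le_trans (le_max_right _ _) hx)
      have hcabs : 0 < |c| := abs_pos.mpr hc
      have h1 : 1 + |a| + |c| / 2 ≤ |c| / 2 * Real.sinh x := by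
        have : |c| / 2 * B = (2 + 2 * |a| + |c|) / 2 := by
          rw [hB]; field_simp
        nlinarith
      have := habs x hx0
      have h2 : 1 ≤ |f x| := by linarith
      calc (1:ℝ) = 1 ^ 2 := by norm_num
        _ ≤ |f x| ^ 2 := by apply pow_le_pow_left₀ (by norm_num) h2
        _ = f x ^ 2 := sq_abs _
    -- contradiction with integrability
    have hint : IntegrableOn (fun _ : ℝ => (1:ℝ)) (Set.Ici M) := by
      apply Integrable.mono (hL2.restrict (s := Set.Ici M)) aestronglyMeasurable_const
      rw [ae_restrict_iff' measurableSet_Ici]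
      filter_upwards with x hx
      have := hkey x hx
      rw [Real.norm_eq_abs, Real.norm_eq_abs, abs_one]
      rw [abs_of_nonneg (by positivity : (0:ℝ) ≤ f x ^ 2)]
      exact this
    rw [integrableOn_const_iff (C := (1:ℝ))] at hint
    rcases hint with h | h
    · norm_num at h
    · rw [Real.volume_Ici] at h
      exact (lt_irrefl _ h).elim
  -- conclude
  refine ⟨f 0, fun x => ?_⟩
  have := hform x
  rw [hc] at this
  rw [eq_div_iff (hcosh0 x)]
  linarith


/-- The Schrödinger operator `L f = -f'' + (2 tanh² - 1) f`. -/
noncomputable def Lop (f : ℝ → ℝ) (x : ℝ) : ℝ :=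
  -deriv (deriv f) x + (2 * Real.tanh x ^ 2 - 1) * f x

/-- The matrix `J = [[-1,-1],[1,-1]]`. -/
def Jmat : Matrix (Fin 2) (Fin 2) ℝ := !![-1, -1; 1, -1]

/-- The kernel of `𝓛 = J ∘ L` is the two-dimensional space generated by
`v₁(x) = (0, 1/cosh x)` and `v₂(x) = (1/cosh x, 0)`. -/
theorem ker_cL_two_dimensional (r1 r2 : ℝ → ℝ)
    (h1 : ContDiff ℝ 2 r1) (h2 : ContDiff ℝ 2 r2)
    (hL2_1 : Integrable (fun x => r1 x ^ 2)) (hL2_2 : Integrable (fun x => r2 x ^ 2))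
    (hker : ∀ x : ℝ, Jmat.mulVec ![Lop r1 x, Lop r2 x] = 0) :
    ∃ a b : ℝ, ∀ x : ℝ, r1 x = a / Real.cosh x ∧ r2 x = b / Real.cosh x := by
  have hzero : ∀ x : ℝ, Lop r1 x = 0 ∧ Lop r2 x = 0 := by
    intro x
    have e0 := congrFun (hker x) 0
    have e1 := congrFun (hker x) 1
    simp [Jmat, Matrix.mulVec, dotProduct, Fin.sum_univ_two] at e0 e1
    constructor <;> linarith
  have hode1 : ∀ x, deriv (deriv r1) x = (2 * Real.tanh x ^ 2 - 1) * r1 x := by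
    intro x
    have := (hzero x).1
    simp only [Lop] at this
    linarith
  have hode2 : ∀ x, deriv (deriv r2) x = (2 * Real.tanh x ^ 2 - 1) * r2 x := by
    intro x
    have := (hzero x).2
    simp only [Lop] at this
    linarith
  obtain ⟨a, ha⟩ := sech_sol r1 h1 hL2_1 hode1
  obtain ⟨b, hb⟩ := sech_sol r2 h2 hL2_2 hode2
  exact ⟨a, b, fun x => ⟨ha x, hb x⟩⟩
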